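/- For every integer k ≥ 1 and every integer n ≥ k+1, the k-th left-down diagonal of the Fibonacci-Fubini triangle satisfies the k-th order homogeneous linear recurrence 0 = Σ_{j=0}^{k} s(k+1, k−j+1) · T(n−j, k), where T(n,k) = F_{k+1} · S(n,k) and s(m,i) are the signed Stirling numbers of the first kind. -/
import Mathlib

/-- Stirling numbers of the second kind. -/
def stirling2 : ℕ → ℕ → ℕ
  | 0, 0 => 1
  | 0, _ + 1 => 0
  | _ + 1, 0 => 0
  | n + 1, k + 1 => stirling2 n k + (k + 1) * stirling2 n (k + 1)

/-- Signed Stirling numbers of the first kind, defined by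
`s(n,k) = s(n-1,k-1) - (n-1)·s(n-1,k)` with `s(0,0) = 1`. -/
def stirling1 : ℕ → ℕ → ℤ
  | 0, 0 => 1
  | 0, _ + 1 => 0
  | n + 1, 0 => -(n : ℤ) * stirling1 n 0
  | n + 1, k + 1 => stirling1 n k - (n : ℤ) * stirling1 n (k + 1)

/-- Entries of the Fibonacci-Fubini triangle. -/
def fibFubiniT (n k : ℕ) : ℕ := Nat.fib (k + 1) * stirling2 n k

lemma stirling1_zero_right : ∀ n, stirling1 (n + 1) 0 = 0
  | 0 => by simp [stirling1]
  | n + 1 => by rw [stirling1, stirling1_zero_right n, mul_zero]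

lemma stirling1_eq_zero_of_lt : ∀ n k, n < k → stirling1 n k = 0
  | 0, _ + 1, _ => by simp [stirling1]
  | n + 1, k + 1, h => by
    rw [stirling1, stirling1_eq_zero_of_lt n k (by omega),
      stirling1_eq_zero_of_lt n (k+1) (by omega)]
    ring

lemma stirling2_zero (d : ℕ) : stirling2 (d + 1) 0 = 0 := by simp [stirling2]

open Finset in
lemma G : ∀ k d : ℕ,
    ∑ i ∈ range (k + 1), stirling1 (k + 1) (i + 1) * (stirling2 (i + d + 1) k : ℤ) = 0
  | 0, d => by simp [stirling2_zero]
  | k + 1, d => by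
    have step : ∀ i, stirling1 (k + 2) (i + 1)
        = stirling1 (k + 1) i - (k + 1 : ℤ) * stirling1 (k + 1) (i + 1) := by
      intro i; rw [show k + 2 = (k+1) + 1 from rfl, stirling1]; push_cast; ring
    have hA : ∑ i ∈ range (k + 2), stirling1 (k + 1) i * (stirling2 (i + d + 1) (k+1) : ℤ)
        = ∑ i ∈ range (k + 1), stirling1 (k + 1) (i + 1) * (stirling2 (i + d + 2) (k+1) : ℤ) := by
      rw [Finset.sum_range_succ', stirling1_zero_right]
      simp only [zero_mul, add_zero]
      exact Finset.sum_congr rfl fun i _ => by rw [show i + 1 + d + 1 = i + d + 2 from by omega]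
    have hB : ∑ i ∈ range (k + 2), (k + 1 : ℤ) * stirling1 (k + 1) (i + 1) * (stirling2 (i + d + 1) (k+1) : ℤ)
        = ∑ i ∈ range (k + 1), (k + 1 : ℤ) * stirling1 (k + 1) (i + 1) * (stirling2 (i + d + 1) (k+1) : ℤ) := by
      rw [Finset.sum_range_succ, stirling1_eq_zero_of_lt (k+1) (k+2) (by omega)]
      ring
    calc ∑ i ∈ range (k + 2), stirling1 (k + 2) (i + 1) * (stirling2 (i + d + 1) (k+1) : ℤ)
        = (∑ i ∈ range (k + 2), stirling1 (k + 1) i * (stirling2 (i + d + 1) (k+1) : ℤ))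
          - ∑ i ∈ range (k + 2), (k + 1 : ℤ) * stirling1 (k + 1) (i + 1) * (stirling2 (i + d + 1) (k+1) : ℤ) := by
          rw [← Finset.sum_sub_distrib]
          exact Finset.sum_congr rfl fun i _ => by rw [step i]; ring
      _ = (∑ i ∈ range (k + 1), stirling1 (k + 1) (i + 1) * (stirling2 (i + d + 2) (k+1) : ℤ))
          - ∑ i ∈ range (k + 1), (k + 1 : ℤ) * stirling1 (k + 1) (i + 1) * (stirling2 (i + d + 1) (k+1) : ℤ) := by
          rw [hA, hB]
      _ = ∑ i ∈ range (k + 1), stirling1 (k + 1) (i + 1) * (stirling2 (i + d + 1) k : ℤ) := by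
          rw [← Finset.sum_sub_distrib]
          refine Finset.sum_congr rfl fun i _ => ?_
          have : stirling2 (i + d + 2) (k + 1)
              = stirling2 (i + d + 1) k + (k + 1) * stirling2 (i + d + 1) (k + 1) := by
            rw [show i + d + 2 = (i + d + 1) + 1 from rfl, stirling2]
          rw [this]; push_cast; ring
      _ = 0 := G k d

open Finset in
/-- The left-down diagonals of the Fibonacci-Fubini triangle satisfy a `k`-th order
homogeneous linear recurrence with Stirling numbers of the first kind as coefficients. -/
theorem fibFubiniT_diagonal_recurrence (k : ℕ) (hk : 1 ≤ k) (n : ℕ) (hn : k + 1 ≤ n) :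
    0 = ∑ j ∈ range (k + 1), stirling1 (k + 1) (k - j + 1) * (fibFubiniT (n - j) k : ℤ) := by
  obtain ⟨d, rfl⟩ : ∃ d, n = k + 1 + d := ⟨n - (k + 1), by omega⟩
  have h1 : ∑ j ∈ range (k + 1), stirling1 (k + 1) (k - j + 1) * (fibFubiniT (k + 1 + d - j) k : ℤ)
      = ∑ i ∈ range (k + 1), stirling1 (k + 1) (i + 1) * (fibFubiniT (i + d + 1) k : ℤ) := by
    rw [← Finset.sum_range_reflect]
    refine Finset.sum_congr rfl fun i hi => ?_
    have hik : i ≤ k := by simpa using Nat.lt_succ_iff.mp (Finset.mem_range.mp hi)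
    rw [show k + 1 - 1 - i = k - i from by omega, show k - (k - i) = i from by omega,
      show k + 1 + d - (k - i) = i + d + 1 from by omega]
  rw [h1]
  simp only [fibFubiniT]
  have h2 : ∑ i ∈ range (k + 1), stirling1 (k + 1) (i + 1) * ((Nat.fib (k+1) * stirling2 (i + d + 1) k : ℕ) : ℤ)
      = (Nat.fib (k+1) : ℤ) * ∑ i ∈ range (k + 1), stirling1 (k + 1) (i + 1) * (stirling2 (i + d + 1) k : ℤ) := by
    rw [Finset.mul_sum]
    exact Finset.sum_congr rfl fun i _ => by push_cast; ring
  rw [h2, G k d, mul_zero]
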